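/- arXiv:2012.15617 — 2 statements merged into one kernel-verified Lean document; each statement's English description precedes it below -/
import Mathlib

section
/- For every finite language L over an alphabet Σ and every weighting μ: Σ → ℝ≥0 (extended to words by μ(w) = Σ_i μ(w_i)), the minimal regular expression length of L is at least the minimal regular expression length of the higher μ-envelope of L, i.e., the sublanguage of all words of L of maximal μ-weight. Similarly, for every regular language L', the minimal regular expression length of L' is at least that of its lower μ-envelope (words of minimal μ-weight). -/
/-- Reverse polish length of a regular expression (number of syntax tree nodes). -/
def reSize {α : Type} : RegularExpression α → ℕ
  | .zero => 1
  | .epsilon => 1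
  | .char _ => 1
  | .plus r s => reSize r + reSize s + 1
  | .comp r s => reSize r + reSize s + 1
  | .star r => reSize r + 1

/-- The `μ`-weight of a word. -/
def wt {α : Type} (μ : α → ℝ) (w : List α) : ℝ := (w.map μ).sum

section Aux

open RegularExpression Language

variable {α : Type} {μ : α → ℝ}

lemma wt_nil (μ : α → ℝ) : wt μ [] = 0 := rfl

lemma wt_append (μ : α → ℝ) (u v : List α) : wt μ (u ++ v) = wt μ u + wt μ v := by
  simp [wt]

lemma wt_nonneg (hμ : ∀ a, 0 ≤ μ a) (w : List α) : 0 ≤ wt μ w := by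
  apply List.sum_nonneg
  intro x hx
  obtain ⟨a, _, rfl⟩ := List.mem_map.mp hx
  exact hμ a

lemma wt_flatten (μ : α → ℝ) (S : List (List α)) :
    wt μ S.flatten = (S.map (wt μ)).sum := by
  induction S with
  | nil => rfl
  | cons a S ih => simp [List.flatten_cons, wt_append, ih]

/-- `r'` describes exactly the words of `r` minimizing `f`, and is nonempty
whenever `r` is. -/
def EnvSpec (f : List α → ℝ) (r r' : RegularExpression α) : Prop :=
  (∀ w, w ∈ r'.matches' ↔ (w ∈ r.matches' ∧ ∀ v ∈ r.matches', f w ≤ f v)) ∧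
  (∀ u, u ∈ r.matches' → ∃ x, x ∈ r'.matches')

lemma notMem_zero' (w : List α) : w ∉ (RegularExpression.zero : RegularExpression α).matches' :=
  Language.notMem_zero w

lemma envSpec_zero (f : List α → ℝ) : EnvSpec f RegularExpression.zero RegularExpression.zero := by
  constructor
  · intro w
    exact ⟨fun h => absurd h (notMem_zero' w), fun h => absurd h.1 (notMem_zero' w)⟩
  · intro u hu
    exact absurd hu (notMem_zero' u)

lemma mem_eps_iff (w : List α) :
    w ∈ (RegularExpression.epsilon : RegularExpression α).matches' ↔ w = [] :=
  Language.mem_one w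

lemma envSpec_eps (f : List α → ℝ) :
    EnvSpec f RegularExpression.epsilon RegularExpression.epsilon := by
  constructor
  · intro w
    rw [mem_eps_iff]
    constructor
    · rintro rfl
      refine ⟨(mem_eps_iff []).mpr rfl, ?_⟩
      intro v hv
      rw [(mem_eps_iff v).mp hv]
    · intro h
      exact (mem_eps_iff w).mp ((mem_eps_iff w).mpr ((mem_eps_iff w).mp h.1))
  · intro u hu
    exact ⟨[], (mem_eps_iff []).mpr rfl⟩

lemma envSpec_char (f : List α → ℝ) (a : α) :
    EnvSpec f (RegularExpression.char a) (RegularExpression.char a) := by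
  constructor
  · intro w
    simp only [matches'_char, Set.mem_singleton_iff]
    constructor
    · rintro rfl
      exact ⟨rfl, by rintro v rfl; exact le_rfl⟩
    · exact fun h => h.1
  · intro u hu
    exact ⟨[a], rfl⟩

lemma envSpec_comp (hf : ∀ u v, f (u ++ v) = f u + f v)
    {r s r' s' : RegularExpression α} (hr : EnvSpec f r r') (hs : EnvSpec f s s') :
    EnvSpec f (r.comp s) (r'.comp s') := by
  have hmem : ∀ (p q : RegularExpression α) (w : List α),
      w ∈ (p.comp q).matches' ↔ ∃ u ∈ p.matches', ∃ v ∈ q.matches', u ++ v = w := by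
    intro p q w
    rw [comp_def, matches'_mul]
    exact Language.mem_mul
  constructor
  · intro w
    rw [hmem]
    constructor
    · rintro ⟨u, hu, v, hv, rfl⟩
      obtain ⟨hur, humin⟩ := (hr.1 u).mp hu
      obtain ⟨hvs, hvmin⟩ := (hs.1 v).mp hv
      refine ⟨(hmem r s _).mpr ⟨u, hur, v, hvs, rfl⟩, ?_⟩
      intro z hz
      obtain ⟨u', hu', v', hv', rfl⟩ := (hmem r s z).mp hz
      rw [hf, hf]
      exact add_le_add (humin u' hu') (hvmin v' hv')
    · rintro ⟨hw, hmin⟩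
      obtain ⟨u, hu, v, hv, rfl⟩ := (hmem r s _).mp hw
      refine ⟨u, (hr.1 u).mpr ⟨hu, ?_⟩, v, (hs.1 v).mpr ⟨hv, ?_⟩, rfl⟩
      · intro z hz
        have := hmin (z ++ v) ((hmem r s _).mpr ⟨z, hz, v, hv, rfl⟩)
        rw [hf, hf] at this
        linarith
      · intro z hz
        have := hmin (u ++ z) ((hmem r s _).mpr ⟨u, hu, z, hz, rfl⟩)
        rw [hf, hf] at this
        linarith
  · intro w hw
    obtain ⟨u, hu, v, hv, _⟩ := (hmem r s w).mp hw
    obtain ⟨x, hx⟩ := hr.2 u hu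
    obtain ⟨y, hy⟩ := hs.2 v hv
    exact ⟨x ++ y, (hmem r' s' _).mpr ⟨x, hx, y, hy, rfl⟩⟩

lemma envSpec_plus {f : List α → ℝ}
    {r s r' s' : RegularExpression α} (hr : EnvSpec f r r') (hs : EnvSpec f s s') :
    ∃ t, EnvSpec f (r.plus s) t ∧ reSize t ≤ reSize r' + reSize s' + 1 := by
  classical
  have hmem : ∀ w, w ∈ (r.plus s).matches' ↔ w ∈ r.matches' ∨ w ∈ s.matches' := by
    intro w
    rw [plus_def, matches'_add]
    exact Language.mem_add _ _ w
  by_cases hA : ∃ u, u ∈ r.matches'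
  · by_cases hB : ∃ u, u ∈ s.matches'
    · obtain ⟨u, hu⟩ := hA
      obtain ⟨v, hv⟩ := hB
      obtain ⟨x, hx⟩ := hr.2 u hu
      obtain ⟨y, hy⟩ := hs.2 v hv
      obtain ⟨hxr, hxmin⟩ := (hr.1 x).mp hx
      obtain ⟨hys, hymin⟩ := (hs.1 y).mp hy
      rcases lt_trichotomy (f x) (f y) with hlt | heq | hgt
      · -- minimum comes from r
        refine ⟨r', ⟨?_, ?_⟩, by omega⟩
        · intro w
          rw [hr.1 w]
          constructor
          · rintro ⟨hwr, hwmin⟩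
            refine ⟨(hmem w).mpr (Or.inl hwr), ?_⟩
            intro z hz
            rcases (hmem z).mp hz with hz | hz
            · exact hwmin z hz
            · calc f w ≤ f x := hwmin x hxr
                _ ≤ f y := le_of_lt hlt
                _ ≤ f z := hymin z hz
          · rintro ⟨hw, hwmin⟩
            rcases (hmem w).mp hw with hw | hw
            · exact ⟨hw, fun z hz => hwmin z ((hmem z).mpr (Or.inl hz))⟩
            · exfalso
              have h1 : f y ≤ f w := hymin w hw
              have h2 : f w ≤ f x := hwmin x ((hmem x).mpr (Or.inl hxr))
              linarith
        · intro w _; exact ⟨x, hx⟩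
      · -- equal minima
        refine ⟨r'.plus s', ⟨?_, ?_⟩, by simp [reSize]⟩
        · intro w
          have hmem' : w ∈ (r'.plus s').matches' ↔ w ∈ r'.matches' ∨ w ∈ s'.matches' := by
            rw [plus_def, matches'_add]; exact Language.mem_add _ _ w
          rw [hmem', hr.1 w, hs.1 w]
          constructor
          · rintro (⟨hwr, hwmin⟩ | ⟨hws, hwmin⟩)
            · refine ⟨(hmem w).mpr (Or.inl hwr), ?_⟩
              intro z hz
              rcases (hmem z).mp hz with hz | hz
              · exact hwmin z hz
              · calc f w ≤ f x := hwmin x hxr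
                  _ = f y := heq
                  _ ≤ f z := hymin z hz
            · refine ⟨(hmem w).mpr (Or.inr hws), ?_⟩
              intro z hz
              rcases (hmem z).mp hz with hz | hz
              · calc f w ≤ f y := hwmin y hys
                  _ = f x := heq.symm
                  _ ≤ f z := hxmin z hz
              · exact hwmin z hz
          · rintro ⟨hw, hwmin⟩
            rcases (hmem w).mp hw with hw | hw
            · exact Or.inl ⟨hw, fun z hz => hwmin z ((hmem z).mpr (Or.inl hz))⟩
            · exact Or.inr ⟨hw, fun z hz => hwmin z ((hmem z).mpr (Or.inr hz))⟩
        · intro w _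
          refine ⟨x, ?_⟩
          rw [plus_def, matches'_add]
          exact (Language.mem_add _ _ x).mpr (Or.inl hx)
      · -- minimum comes from s
        refine ⟨s', ⟨?_, ?_⟩, by omega⟩
        · intro w
          rw [hs.1 w]
          constructor
          · rintro ⟨hws, hwmin⟩
            refine ⟨(hmem w).mpr (Or.inr hws), ?_⟩
            intro z hz
            rcases (hmem z).mp hz with hz | hz
            · calc f w ≤ f y := hwmin y hys
                _ ≤ f x := le_of_lt hgt
                _ ≤ f z := hxmin z hz
            · exact hwmin z hz
          · rintro ⟨hw, hwmin⟩
            rcases (hmem w).mp hw with hw | hw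
            · exfalso
              have h1 : f x ≤ f w := hxmin w hw
              have h2 : f w ≤ f y := hwmin y ((hmem y).mpr (Or.inr hys))
              linarith
            · exact ⟨hw, fun z hz => hwmin z ((hmem z).mpr (Or.inr hz))⟩
        · intro w _; exact ⟨y, hy⟩
    · -- s empty
      refine ⟨r', ⟨?_, ?_⟩, by omega⟩
      · intro w
        rw [hr.1 w]
        have hs' : ∀ z, z ∈ s.matches' → False := fun z hz => hB ⟨z, hz⟩
        constructor
        · rintro ⟨hwr, hwmin⟩
          refine ⟨(hmem w).mpr (Or.inl hwr), ?_⟩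
          intro z hz
          rcases (hmem z).mp hz with hz | hz
          · exact hwmin z hz
          · exact absurd hz (hs' z)
        · rintro ⟨hw, hwmin⟩
          rcases (hmem w).mp hw with hw | hw
          · exact ⟨hw, fun z hz => hwmin z ((hmem z).mpr (Or.inl hz))⟩
          · exact absurd hw (hs' w)
      · intro w hw
        rcases (hmem w).mp hw with hw | hw
        · exact hr.2 w hw
        · exact absurd hw (fun h => hB ⟨w, h⟩)
  · -- r empty
    refine ⟨s', ⟨?_, ?_⟩, by omega⟩
    · intro w
      rw [hs.1 w]
      have hr' : ∀ z, z ∈ r.matches' → False := fun z hz => hA ⟨z, hz⟩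
      constructor
      · rintro ⟨hws, hwmin⟩
        refine ⟨(hmem w).mpr (Or.inr hws), ?_⟩
        intro z hz
        rcases (hmem z).mp hz with hz | hz
        · exact absurd hz (hr' z)
        · exact hwmin z hz
      · rintro ⟨hw, hwmin⟩
        rcases (hmem w).mp hw with hw | hw
        · exact absurd hw (hr' w)
        · exact ⟨hw, fun z hz => hwmin z ((hmem z).mpr (Or.inr hz))⟩
    · intro w hw
      rcases (hmem w).mp hw with hw | hw
      · exact absurd hw (fun h => hA ⟨w, h⟩)
      · exact hs.2 w hw

/-- membership in the star. -/
lemma mem_star_iff (r : RegularExpression α) (w : List α) :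
    w ∈ r.star.matches' ↔ ∃ S : List (List α), w = S.flatten ∧ ∀ y ∈ S, y ∈ r.matches' := by
  rw [matches'_star]
  exact Language.mem_kstar

/-- Lower envelope: the main induction. -/
lemma lowerAux (μ : α → ℝ) (hμ : ∀ a, 0 ≤ μ a) (r : RegularExpression α) :
    ∃ r', EnvSpec (wt μ) r r' ∧ reSize r' ≤ reSize r := by
  classical
  induction r with
  | zero => exact ⟨.zero, envSpec_zero _, le_rfl⟩
  | epsilon => exact ⟨.epsilon, envSpec_eps _, le_rfl⟩
  | char a => exact ⟨.char a, envSpec_char _ a, le_rfl⟩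
  | plus r s ihr ihs =>
      obtain ⟨r', hr, hr1⟩ := ihr
      obtain ⟨s', hs, hs1⟩ := ihs
      obtain ⟨t, ht, ht1⟩ := envSpec_plus hr hs
      exact ⟨t, ht, by simp only [reSize] at *; omega⟩
  | comp r s ihr ihs =>
      obtain ⟨r', hr, hr1⟩ := ihr
      obtain ⟨s', hs, hs1⟩ := ihs
      exact ⟨r'.comp s', envSpec_comp (wt_append μ) hr hs, by simp only [reSize]; omega⟩
  | star r ihr =>
      obtain ⟨r', hr, hr1⟩ := ihr
      by_cases h0 : ∃ u ∈ r.matches', wt μ u ≤ 0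
      · -- minimum weight of r is 0: take star r'
        obtain ⟨u, hu, hu0⟩ := h0
        obtain ⟨x, hx⟩ := hr.2 u hu
        obtain ⟨hxr, hxmin⟩ := (hr.1 x).mp hx
        have hx0 : wt μ x = 0 :=
          le_antisymm (le_trans (hxmin u hu) hu0) (wt_nonneg hμ x)
        -- every element of r' has weight 0
        have hzero : ∀ y, y ∈ r'.matches' → wt μ y = 0 := by
          intro y hy
          obtain ⟨hyr, hymin⟩ := (hr.1 y).mp hy
          exact le_antisymm (le_trans (hymin u hu) hu0) (wt_nonneg hμ y)
        refine ⟨r'.star, ⟨?_, ?_⟩, by simp only [reSize]; omega⟩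
        · intro w
          rw [mem_star_iff]
          constructor
          · rintro ⟨S, rfl, hS⟩
            have hw0 : wt μ S.flatten = 0 := by
              rw [wt_flatten]
              apply List.sum_eq_zero
              intro z hz
              obtain ⟨y, hy, rfl⟩ := List.mem_map.mp hz
              exact hzero y (hS y hy)
            refine ⟨(mem_star_iff r _).mpr ⟨S, rfl, fun y hy => ((hr.1 y).mp (hS y hy)).1⟩, ?_⟩
            intro z hz
            rw [hw0]
            exact wt_nonneg hμ z
          · rintro ⟨hw, hwmin⟩
            have hw0 : wt μ w = 0 := by
              have h1 : wt μ w ≤ wt μ [] :=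
                hwmin [] ((mem_star_iff r []).mpr ⟨[], rfl, by simp⟩)
              rw [wt_nil] at h1
              exact le_antisymm h1 (wt_nonneg hμ w)
            obtain ⟨S, rfl, hS⟩ := (mem_star_iff r w).mp hw
            refine ⟨S, rfl, ?_⟩
            intro y hy
            have hy0 : wt μ y = 0 := by
              have hle : wt μ y ≤ (S.map (wt μ)).sum := by
                apply List.single_le_sum
                · intro z hz
                  obtain ⟨z', _, rfl⟩ := List.mem_map.mp hz
                  exact wt_nonneg hμ z'
                · exact List.mem_map.mpr ⟨y, hy, rfl⟩
              rw [← wt_flatten, hw0] at hle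
              exact le_antisymm hle (wt_nonneg hμ y)
            refine (hr.1 y).mpr ⟨hS y hy, ?_⟩
            intro z hz
            rw [hy0]
            exact wt_nonneg hμ z
        · intro w _
          exact ⟨[], (mem_star_iff r' []).mpr ⟨[], rfl, by simp⟩⟩
      · -- all words of r have positive weight: envelope of star is {[]}
        refine ⟨.epsilon, ⟨?_, ?_⟩, by simp only [reSize]; omega⟩
        · intro w
          rw [mem_eps_iff]
          constructor
          · rintro rfl
            refine ⟨(mem_star_iff r []).mpr ⟨[], rfl, by simp⟩, ?_⟩
            intro z _
            rw [wt_nil]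
            exact wt_nonneg hμ z
          · rintro ⟨hw, hwmin⟩
            have hw0 : wt μ w = 0 := by
              have h1 : wt μ w ≤ wt μ [] :=
                hwmin [] ((mem_star_iff r []).mpr ⟨[], rfl, by simp⟩)
              rw [wt_nil] at h1
              exact le_antisymm h1 (wt_nonneg hμ w)
            obtain ⟨S, rfl, hS⟩ := (mem_star_iff r w).mp hw
            have : S = [] := by
              rw [List.eq_nil_iff_forall_not_mem]
              intro y hy
              apply h0
              refine ⟨y, hS y hy, ?_⟩
              have hle : wt μ y ≤ (S.map (wt μ)).sum := by
                apply List.single_le_sum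
                · intro z hz
                  obtain ⟨z', _, rfl⟩ := List.mem_map.mp hz
                  exact wt_nonneg hμ z'
                · exact List.mem_map.mpr ⟨y, hy, rfl⟩
              rw [← wt_flatten, hw0] at hle
              exact hle
            subst this
            rfl
        · intro w _
          exact ⟨[], (mem_eps_iff []).mpr rfl⟩

/-- Higher envelope: the main induction, for finite languages. -/
lemma higherAux (μ : α → ℝ) (r : RegularExpression α) :
    {w | w ∈ r.matches'}.Finite →
    ∃ r', EnvSpec (fun w => -(wt μ w)) r r' ∧ reSize r' ≤ reSize r := by
  classical
  induction r with
  | zero => exact fun _ => ⟨.zero, envSpec_zero _, le_rfl⟩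
  | epsilon => exact fun _ => ⟨.epsilon, envSpec_eps _, le_rfl⟩
  | char a => exact fun _ => ⟨.char a, envSpec_char _ a, le_rfl⟩
  | plus r s ihr ihs =>
      intro hfin
      have hmem : ∀ w, w ∈ (r.plus s).matches' ↔ w ∈ r.matches' ∨ w ∈ s.matches' := by
        intro w
        rw [plus_def, matches'_add]
        exact Language.mem_add _ _ w
      obtain ⟨r', hr, hr1⟩ := ihr (hfin.subset (fun w hw => (hmem w).mpr (Or.inl hw)))
      obtain ⟨s', hs, hs1⟩ := ihs (hfin.subset (fun w hw => (hmem w).mpr (Or.inr hw)))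
      obtain ⟨t, ht, ht1⟩ := envSpec_plus hr hs
      exact ⟨t, ht, by simp only [reSize] at *; omega⟩
  | comp r s ihr ihs =>
      intro hfin
      have hmem : ∀ w, w ∈ (r.comp s).matches' ↔
          ∃ u ∈ r.matches', ∃ v ∈ s.matches', u ++ v = w := by
        intro w
        rw [comp_def, matches'_mul]
        exact Language.mem_mul
      by_cases hA : ∃ u, u ∈ r.matches'
      · by_cases hB : ∃ u, u ∈ s.matches'
        · obtain ⟨u₀, hu₀⟩ := hA
          obtain ⟨v₀, hv₀⟩ := hB
          have hfr : {w | w ∈ r.matches'}.Finite := by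
            have : {w | w ∈ r.matches'} ⊆ (fun u => u ++ v₀) ⁻¹' {w | w ∈ (r.comp s).matches'} := by
              intro w hw
              exact (hmem _).mpr ⟨w, hw, v₀, hv₀, rfl⟩
            exact (hfin.preimage (Set.injOn_of_injective (List.append_left_injective v₀))).subset this
          have hfs : {w | w ∈ s.matches'}.Finite := by
            have : {w | w ∈ s.matches'} ⊆ (fun v => u₀ ++ v) ⁻¹' {w | w ∈ (r.comp s).matches'} := by
              intro w hw
              exact (hmem _).mpr ⟨u₀, hu₀, w, hw, rfl⟩
            exact (hfin.preimage (Set.injOn_of_injective (List.append_right_injective u₀))).subset this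
          obtain ⟨r', hr, hr1⟩ := ihr hfr
          obtain ⟨s', hs, hs1⟩ := ihs hfs
          refine ⟨r'.comp s', envSpec_comp ?_ hr hs, by simp only [reSize]; omega⟩
          intro u v
          rw [wt_append]
          ring
        · refine ⟨.zero, ⟨?_, ?_⟩, by simp only [reSize]; omega⟩
          · intro w
            refine ⟨fun h => absurd h (notMem_zero' w), fun h => ?_⟩
            obtain ⟨u, hu, v, hv, _⟩ := (hmem w).mp h.1
            exact absurd ⟨v, hv⟩ hB
          · intro w hw
            obtain ⟨u, hu, v, hv, _⟩ := (hmem w).mp hw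
            exact absurd ⟨v, hv⟩ hB
      · refine ⟨.zero, ⟨?_, ?_⟩, by simp only [reSize]; omega⟩
        · intro w
          refine ⟨fun h => absurd h (notMem_zero' w), fun h => ?_⟩
          obtain ⟨u, hu, v, hv, _⟩ := (hmem w).mp h.1
          exact absurd ⟨u, hu⟩ hA
        · intro w hw
          obtain ⟨u, hu, v, hv, _⟩ := (hmem w).mp hw
          exact absurd ⟨u, hu⟩ hA
  | star r ihr =>
      intro hfin
      -- L(r) ⊆ {[]}, for otherwise L(star r) is infinite
      have hsub : ∀ u ∈ r.matches', u = [] := by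
        by_contra hcon
        push_neg at hcon
        obtain ⟨u, hu, hune⟩ := hcon
        have hinj : Function.Injective (fun n : ℕ => (List.replicate n u).flatten) := by
          intro m n hmn
          have hm : ∀ k : ℕ, ((List.replicate k u).flatten).length = k * u.length := by
            intro k
            rw [List.length_flatten]
            simp [List.map_replicate, List.sum_replicate, smul_eq_mul]
          have := congrArg List.length hmn
          rw [hm m, hm n] at this
          have hupos : 0 < u.length := List.length_pos_iff.mpr hune
          exact Nat.eq_of_mul_eq_mul_right hupos this
        have hmemall : ∀ n : ℕ, (List.replicate n u).flatten ∈ {w | w ∈ r.star.matches'} := by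
          intro n
          exact (mem_star_iff r _).mpr ⟨List.replicate n u, rfl,
            fun y hy => (List.eq_of_mem_replicate hy) ▸ hu⟩
        exact (Set.infinite_of_injective_forall_mem hinj hmemall) hfin
      have hstar : ∀ w ∈ r.star.matches', w = [] := by
        intro w hw
        obtain ⟨S, rfl, hS⟩ := (mem_star_iff r w).mp hw
        rw [List.flatten_eq_nil_iff]
        intro y hy
        exact hsub y (hS y hy)
      refine ⟨.epsilon, ⟨?_, ?_⟩, by simp only [reSize]; omega⟩
      · intro w
        rw [mem_eps_iff]
        constructor
        · rintro rfl
          refine ⟨(mem_star_iff r []).mpr ⟨[], rfl, by simp⟩, ?_⟩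
          intro z hz
          rw [hstar z hz]
        · rintro ⟨hw, _⟩
          exact hstar w hw
      · intro w _
        exact ⟨[], (mem_eps_iff []).mpr rfl⟩

end Aux

/-- Envelopes: for every weighting `μ : Σ → ℝ≥0`, the minimal regular
expression length of a finite language `L` is at least that of its higher
`μ`-envelope (the words of `L` of maximal `μ`-weight), and the minimal regular
expression length of any regular language `L'` is at least that of its lower
`μ`-envelope (the words of minimal `μ`-weight).  Both claims are expressed by
producing, from any expression for the language, an expression for the
envelope of no greater length. -/
theorem envelope_bound {α : Type} (μ : α → ℝ) (hμ : ∀ a, 0 ≤ μ a) :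
    (∀ r : RegularExpression α,
      {w | w ∈ r.matches'}.Finite →
      ∃ r' : RegularExpression α,
        (∀ w, w ∈ r'.matches' ↔
          (w ∈ r.matches' ∧ ∀ v ∈ r.matches', wt μ v ≤ wt μ w)) ∧
        reSize r' ≤ reSize r) ∧
    (∀ r : RegularExpression α,
      ∃ r' : RegularExpression α,
        (∀ w, w ∈ r'.matches' ↔
          (w ∈ r.matches' ∧ ∀ v ∈ r.matches', wt μ w ≤ wt μ v)) ∧
        reSize r' ≤ reSize r) := by
  constructor
  · intro r hfin
    obtain ⟨r', hr, hr1⟩ := higherAux μ r hfin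
    refine ⟨r', fun w => ?_, hr1⟩
    rw [hr.1 w]
    constructor
    · rintro ⟨h1, h2⟩
      exact ⟨h1, fun v hv => neg_le_neg_iff.mp (h2 v hv)⟩
    · rintro ⟨h1, h2⟩
      exact ⟨h1, fun v hv => neg_le_neg_iff.mpr (h2 v hv)⟩
  · intro r
    obtain ⟨r', hr, hr1⟩ := lowerAux μ hμ r
    exact ⟨r', hr.1, hr1⟩
end

section
/- For the function f(x) = −n·H(x) − 2nx + (1/4)·[3·log₂(nx) + (log₂(nx))²], where H(x) = −x·log₂ x − (1−x)·log₂(1−x), and for n ≥ 8, the second derivative f''(x) is strictly positive for all x ∈ [1/2, 1); hence f is convex on [1/2, 1). -/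
lemma aux1 (n : ℕ) (hn : 0 < n) (x : ℝ) (hx : x ∈ Set.Ioo (0:ℝ) 1) :
    HasDerivAt (fun x : ℝ =>
      -((n : ℝ) * (-(x * Real.logb 2 x) - (1 - x) * Real.logb 2 (1 - x)))
        - 2 * (n : ℝ) * x
        + (1 / 4) * (3 * Real.logb 2 ((n : ℝ) * x) + (Real.logb 2 ((n : ℝ) * x)) ^ 2))
    ((n:ℝ)/Real.log 2*(Real.log x - Real.log (1-x)) - 2*(n:ℝ) + 3/(4*Real.log 2*x)
      + Real.log ((n:ℝ)*x)/(2*(Real.log 2)^2*x)) x := by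
  obtain ⟨hx0, hx1⟩ := hx
  have hc : (0:ℝ) < Real.log 2 := Real.log_pos (by norm_num)
  have hx0' : x ≠ 0 := ne_of_gt hx0
  have hx1' : (1:ℝ) - x ≠ 0 := by intro h; linarith [h]
  have hn0 : (0:ℝ) < (n:ℝ) := by exact_mod_cast hn
  have hnx : (n:ℝ) * x ≠ 0 := by positivity
  simp only [Real.logb]
  have h1 : HasDerivAt (fun y:ℝ => y * (Real.log y / Real.log 2))
      (1 * (Real.log x / Real.log 2) + x * (x⁻¹ / Real.log 2)) x :=
    (hasDerivAt_id x).mul ((Real.hasDerivAt_log hx0').div_const _)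
  have ha : HasDerivAt (fun y:ℝ => 1 - y) (-1) x := (hasDerivAt_id x).const_sub 1
  have h2 : HasDerivAt (fun y:ℝ => (1-y) * (Real.log (1-y) / Real.log 2))
      ((-1) * (Real.log (1-x) / Real.log 2) + (1-x) * ((-1/(1-x)) / Real.log 2)) x :=
    ha.mul ((ha.log hx1').div_const _)
  have h3 : HasDerivAt (fun y:ℝ => Real.log ((n:ℝ)*y) / Real.log 2)
      (((n:ℝ)*1/((n:ℝ)*x)) / Real.log 2) x :=
    (((hasDerivAt_id x).const_mul (n:ℝ)).log hnx).div_const _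
  have H := ((((h1.neg.sub h2).const_mul (n:ℝ)).neg.sub
      ((hasDerivAt_id x).const_mul (2*(n:ℝ)))).add
      (((h3.const_mul 3).add (h3.pow 2)).const_mul (1/4)))
  refine H.congr_deriv ?_
  norm_num only [pow_one]
  field_simp
  ring

lemma aux2 (n : ℕ) (hn : 0 < n) (x : ℝ) (hx : x ∈ Set.Ioo (0:ℝ) 1) :
    HasDerivAt (fun x : ℝ => (n:ℝ)/Real.log 2*(Real.log x - Real.log (1-x)) - 2*(n:ℝ)
        + 3/(4*Real.log 2*x) + Real.log ((n:ℝ)*x)/(2*(Real.log 2)^2*x))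
    ((n:ℝ)/(Real.log 2*x*(1-x)) - 3/(4*Real.log 2*x^2) + 1/(2*(Real.log 2)^2*x^2)
      - Real.log ((n:ℝ)*x)/(2*(Real.log 2)^2*x^2)) x := by
  obtain ⟨hx0, hx1⟩ := hx
  have hc : (0:ℝ) < Real.log 2 := Real.log_pos (by norm_num)
  have hx0' : x ≠ 0 := ne_of_gt hx0
  have h1x : (0:ℝ) < 1 - x := by linarith
  have hx1' : (1:ℝ) - x ≠ 0 := ne_of_gt h1x
  have hn0 : (0:ℝ) < (n:ℝ) := by exact_mod_cast hn
  have hnx : (n:ℝ) * x ≠ 0 := by positivity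
  have ha : HasDerivAt (fun y:ℝ => 1 - y) (-1) x := (hasDerivAt_id x).const_sub 1
  have h1 : HasDerivAt (fun y:ℝ => (n:ℝ)/Real.log 2*(Real.log y - Real.log (1-y)))
      ((n:ℝ)/Real.log 2 * (x⁻¹ - (-1/(1-x)))) x :=
    ((Real.hasDerivAt_log hx0').sub (ha.log hx1')).const_mul _
  have h2 : HasDerivAt (fun y:ℝ => 3/(4*Real.log 2*y))
      ((0*(4*Real.log 2*x) - 3*(4*Real.log 2*1))/(4*Real.log 2*x)^2) x :=
    (hasDerivAt_const x 3).div (((hasDerivAt_id x).const_mul (4*Real.log 2))) (by positivity)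
  have h3 : HasDerivAt (fun y:ℝ => Real.log ((n:ℝ)*y)/(2*(Real.log 2)^2*y))
      ((((n:ℝ)*1/((n:ℝ)*x))*(2*(Real.log 2)^2*x) - Real.log ((n:ℝ)*x)*(2*(Real.log 2)^2*1))
        /(2*(Real.log 2)^2*x)^2) x :=
    (((hasDerivAt_id x).const_mul (n:ℝ)).log hnx).div
      ((hasDerivAt_id x).const_mul (2*(Real.log 2)^2)) (by positivity)
  have H := (((h1.sub_const (2*(n:ℝ))).add h2).add h3)
  refine H.congr_deriv ?_
  field_simp
  ring

lemma aux3 (n : ℕ) (hn : 8 ≤ n) (x : ℝ) (hx : x ∈ Set.Ico (1/2:ℝ) 1) :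
    0 < (n:ℝ)/(Real.log 2*x*(1-x)) - 3/(4*Real.log 2*x^2) + 1/(2*(Real.log 2)^2*x^2)
      - Real.log ((n:ℝ)*x)/(2*(Real.log 2)^2*x^2) := by
  obtain ⟨hxl, hxu⟩ := hx
  have hc : (0:ℝ) < Real.log 2 := Real.log_pos (by norm_num)
  have hx0 : (0:ℝ) < x := by linarith
  have h1x : (0:ℝ) < 1 - x := by linarith
  have hn8 : (8:ℝ) ≤ (n:ℝ) := by exact_mod_cast hn
  have hn0 : (0:ℝ) < (n:ℝ) := by linarith
  -- log n ≤ n * log 2, since n ≤ 2^n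
  have hlog : Real.log ((n:ℝ)*x) ≤ (n:ℝ) * Real.log 2 := by
    have h2n : (n:ℝ) * x ≤ (2:ℝ)^n := by
      have : (n:ℝ) ≤ (2:ℝ)^n := by exact_mod_cast (Nat.lt_two_pow_self (n := n)).le
      nlinarith
    calc Real.log ((n:ℝ)*x) ≤ Real.log ((2:ℝ)^n) :=
          Real.log_le_log (by positivity) h2n
      _ = (n:ℝ) * Real.log 2 := by simp [Real.log_pow]
  have hlog0 : 0 ≤ Real.log ((n:ℝ)*x) := by
    apply Real.log_nonneg; nlinarith
  -- key bounds
  have hx2 : (1:ℝ)/4 ≤ x^2 := by nlinarith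
  have hxx : x*(1-x) ≤ 1/4 := by nlinarith
  have hxxpos : 0 < x*(1-x) := by positivity
  have hA : 4*(n:ℝ)/Real.log 2 ≤ (n:ℝ)/(Real.log 2*x*(1-x)) := by
    rw [div_le_div_iff₀ (by positivity) (by positivity)]
    nlinarith
  have hB : 3/(4*Real.log 2*x^2) ≤ 3/Real.log 2 := by
    rw [div_le_div_iff₀ (by positivity) (by positivity)]
    nlinarith
  have hD : Real.log ((n:ℝ)*x)/(2*(Real.log 2)^2*x^2) ≤ 2*(n:ℝ)/Real.log 2 := by
    rw [div_le_div_iff₀ (by positivity) (by positivity)]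
    nlinarith [mul_le_mul_of_nonneg_right hlog hc.le,
      mul_le_mul_of_nonneg_left hx2 (mul_pos hn0 (mul_pos hc hc)).le]
  have hE : (0:ℝ) < 1/(2*(Real.log 2)^2*x^2) := by positivity
  have hAB : 3/Real.log 2 + 2*(n:ℝ)/Real.log 2 < 4*(n:ℝ)/Real.log 2 := by
    rw [← add_div, div_lt_div_iff₀ hc hc]
    nlinarith
  linarith

/-- For `n ≥ 8`, the function
`f(x) = −n·H(x) − 2nx + (1/4)·(3·log₂(nx) + (log₂(nx))²)`, where `H` is the
binary entropy function, has strictly positive second derivative on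
`[1/2, 1)`; hence `f` is convex on `[1/2, 1)`. -/
theorem f_second_deriv_pos_and_convex (n : ℕ) (hn : 8 ≤ n)
    (f : ℝ → ℝ)
    (hf : f = fun x : ℝ =>
      -((n : ℝ) * (-(x * Real.logb 2 x) - (1 - x) * Real.logb 2 (1 - x)))
        - 2 * (n : ℝ) * x
        + (1 / 4) * (3 * Real.logb 2 ((n : ℝ) * x) + (Real.logb 2 ((n : ℝ) * x)) ^ 2)) :
    (∀ x ∈ Set.Ico (1 / 2 : ℝ) 1, 0 < deriv (deriv f) x) ∧
    ConvexOn ℝ (Set.Ico (1 / 2 : ℝ) 1) f := by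
  subst hf
  have hn0 : 0 < n := by omega
  have hmem : ∀ x ∈ Set.Ico (1/2:ℝ) 1, x ∈ Set.Ioo (0:ℝ) 1 :=
    fun x hx => ⟨by linarith [hx.1], hx.2⟩
  set f : ℝ → ℝ := fun x : ℝ =>
      -((n : ℝ) * (-(x * Real.logb 2 x) - (1 - x) * Real.logb 2 (1 - x)))
        - 2 * (n : ℝ) * x
        + (1 / 4) * (3 * Real.logb 2 ((n : ℝ) * x) + (Real.logb 2 ((n : ℝ) * x)) ^ 2)
    with hfdef
  have hderiv : ∀ x ∈ Set.Ioo (0:ℝ) 1, deriv f x =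
      (n:ℝ)/Real.log 2*(Real.log x - Real.log (1-x)) - 2*(n:ℝ) + 3/(4*Real.log 2*x)
        + Real.log ((n:ℝ)*x)/(2*(Real.log 2)^2*x) :=
    fun x hx => (aux1 n hn0 x hx).deriv
  have h2 : ∀ x ∈ Set.Ico (1/2:ℝ) 1, deriv (deriv f) x =
      (n:ℝ)/(Real.log 2*x*(1-x)) - 3/(4*Real.log 2*x^2) + 1/(2*(Real.log 2)^2*x^2)
        - Real.log ((n:ℝ)*x)/(2*(Real.log 2)^2*x^2) := by
    intro x hx
    have hx' := hmem x hx
    have hEq : deriv f =ᶠ[nhds x] (fun y =>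
        (n:ℝ)/Real.log 2*(Real.log y - Real.log (1-y)) - 2*(n:ℝ) + 3/(4*Real.log 2*y)
          + Real.log ((n:ℝ)*y)/(2*(Real.log 2)^2*y)) :=
      Filter.eventuallyEq_of_mem (Ioo_mem_nhds hx'.1 hx'.2) (fun y hy => hderiv y hy)
    rw [hEq.deriv_eq, (aux2 n hn0 x hx').deriv]
  have hpos : ∀ x ∈ Set.Ico (1/2:ℝ) 1, 0 < deriv (deriv f) x := by
    intro x hx
    rw [h2 x hx]
    exact aux3 n hn x hx
  refine ⟨hpos, ?_⟩
  have hcont : ContinuousOn f (Set.Ico (1/2:ℝ) 1) :=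
    fun x hx => (aux1 n hn0 x (hmem x hx)).continuousAt.continuousWithinAt
  refine (strictConvexOn_of_deriv2_pos (convex_Ico _ _) hcont ?_).convexOn
  intro x hx
  rw [interior_Ico] at hx
  have hx' : x ∈ Set.Ico (1/2:ℝ) 1 := ⟨hx.1.le, hx.2⟩
  simpa [Function.iterate_succ, Function.comp] using hpos x hx'
end
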